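/- arXiv:1803.06048 — 2 statements merged into one kernel-verified Lean document; each statement's English description precedes it below -/
import Mathlib

section
/- Let L and Φ be square-integrable real random variables on a probability space (Ω, 𝓕, P) with Var(Φ) > 0, and let T_lc, T_hc ∈ ℝ be constants such that the error term η := L − ((1−Φ)·T_lc + Φ·T_hc) satisfies E[η] = 0 and Cov(η, Φ) = 0. Then T_hc − T_lc = Cov(L, Φ)/Var(Φ) and T_lc = E[L] − (Cov(L, Φ)/Var(Φ))·E[Φ]; in particular T_lc and T_hc are determined by the joint distribution of (L, Φ). -/
open MeasureTheory

/-- Covariance of two real random variables: `Cov(X, Y) = E[X·Y] − E[X]·E[Y]`. -/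
noncomputable def cov {Ω : Type*} [MeasureSpace Ω] (X Y : Ω → ℝ) : ℝ :=
  (∫ ω, X ω * Y ω) - (∫ ω, X ω) * (∫ ω, Y ω)

/-- Variance of a real random variable: `Var(X) = Cov(X, X)`. -/
noncomputable def var {Ω : Type*} [MeasureSpace Ω] (X : Ω → ℝ) : ℝ := cov X X

lemma integrable_mul_of_memL2 {Ω : Type*} [MeasureSpace Ω] {f g : Ω → ℝ}
    (hf : MemLp f 2) (hg : MemLp g 2) : Integrable (fun ω => f ω * g ω) := by
  have hbound : Integrable (fun ω => (1/2 : ℝ) * (f ω ^ 2 + g ω ^ 2)) :=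
    (hf.integrable_sq.add hg.integrable_sq).const_mul _
  refine hbound.mono' (hf.aestronglyMeasurable.mul hg.aestronglyMeasurable) ?_
  filter_upwards with ω
  rw [Real.norm_eq_abs, abs_mul]
  nlinarith [sq_nonneg (|f ω| - |g ω|), sq_abs (f ω), sq_abs (g ω),
    abs_nonneg (f ω), abs_nonneg (g ω)]

/-- Proposition 1 (identification of principal causal effects via zero site-level
correlation): if the error `η = L − ((1−Φ)·T_lc + Φ·T_hc)` has mean zero and is
uncorrelated with `Φ`, and `Var(Φ) > 0`, then `T_hc − T_lc = Cov(L,Φ)/Var(Φ)` and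
`T_lc = E[L] − (Cov(L,Φ)/Var(Φ))·E[Φ]`. -/
theorem stmt_0 {Ω : Type*} [MeasureSpace Ω]
    [IsProbabilityMeasure (volume : Measure Ω)]
    (L Φ : Ω → ℝ) (hL : MemLp L 2) (hΦ : MemLp Φ 2)
    (hvar : 0 < var Φ) (Tlc Thc : ℝ)
    (hmean : (∫ ω, (L ω - ((1 - Φ ω) * Tlc + Φ ω * Thc))) = 0)
    (hcov : cov (fun ω => L ω - ((1 - Φ ω) * Tlc + Φ ω * Thc)) Φ = 0) :
    Thc - Tlc = cov L Φ / var Φ ∧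
      Tlc = (∫ ω, L ω) - (cov L Φ / var Φ) * (∫ ω, Φ ω) := by
  have hIL : Integrable L := hL.integrable one_le_two
  have hIΦ : Integrable Φ := hΦ.integrable one_le_two
  have hILΦ : Integrable (fun ω => L ω * Φ ω) := integrable_mul_of_memL2 hL hΦ
  have hIΦΦ : Integrable (fun ω => Φ ω * Φ ω) := integrable_mul_of_memL2 hΦ hΦ
  set a := ∫ ω, L ω with ha
  set b := ∫ ω, Φ ω with hb
  set c := ∫ ω, L ω * Φ ω with hc0
  set d := ∫ ω, Φ ω * Φ ω with hd0
  have h1 : (fun ω => L ω - ((1 - Φ ω) * Tlc + Φ ω * Thc))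
      = fun ω => L ω - Tlc - (Thc - Tlc) * Φ ω := by funext ω; ring
  have hi1 : Integrable (fun ω => L ω - Tlc) := hIL.sub (integrable_const Tlc)
  have hm : a - Tlc - (Thc - Tlc) * b = 0 := by
    rw [h1, integral_sub hi1 (hIΦ.const_mul _),
      integral_sub hIL (integrable_const Tlc), integral_const, integral_const_mul] at hmean
    simpa using hmean
  have hm' : (∫ ω, L ω - ((1 - Φ ω) * Tlc + Φ ω * Thc)) = 0 := hmean
  have hc : c - Tlc * b - (Thc - Tlc) * d = 0 := by
    unfold cov at hcov
    rw [hm', zero_mul, sub_zero] at hcov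
    have h2 : (fun ω => (L ω - ((1 - Φ ω) * Tlc + Φ ω * Thc)) * Φ ω)
        = fun ω => L ω * Φ ω - Tlc * Φ ω - (Thc - Tlc) * (Φ ω * Φ ω) := by
      funext ω; ring
    have hi2 : Integrable (fun ω => L ω * Φ ω - Tlc * Φ ω) := hILΦ.sub (hIΦ.const_mul Tlc)
    rw [h2, integral_sub hi2 (hIΦΦ.const_mul _),
      integral_sub hILΦ (hIΦ.const_mul Tlc), integral_const_mul, integral_const_mul] at hcov
    simpa using hcov
  have hvar' : var Φ = d - b * b := rfl
  have hcovLΦ : cov L Φ = c - a * b := rfl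
  have hne : d - b * b ≠ 0 := by rw [hvar'] at hvar; linarith
  have h3 : Thc - Tlc = cov L Φ / var Φ := by
    rw [hcovLΦ, hvar']
    rw [eq_div_iff hne]
    linear_combination -hc + b * hm
  refine ⟨h3, ?_⟩
  rw [← h3]
  linear_combination -hm
end

section
/- Let (Ω, 𝓕, P) be a probability space and let D₀, D₁ : Ω → T be measurable maps into the three-element type T = {e, lq, hq}. Assume No Defiers: almost surely it is not the case that D₀ = e and D₁ ≠ e; and No Flip-Floppers: almost surely it is not the case that (D₁ = lq and D₀ = hq) or (D₁ = hq and D₀ = lq). Then the Complier strata proportions satisfy P(D₁ = e and D₀ = lq) = P(D₀ = lq) − P(D₁ = lq), P(D₁ = e and D₀ = hq) = P(D₀ = hq) − P(D₁ = hq), and consequently the total Complier proportion satisfies P(D₁ = e and D₀ = lq) + P(D₁ = e and D₀ = hq) = P(D₁ = e) − P(D₀ = e). -/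
open MeasureTheory

/-- School types: ECHS (`e`), low-quality public (`lq`), high-quality public (`hq`). -/
inductive SchoolType : Type
  | e | lq | hq
  deriving DecidableEq

instance : MeasurableSpace SchoolType := ⊤

/-- Under No Defiers and No Flip-Floppers, the Low- and High-Quality Complier
proportions are identified: `π_lc = P(D₀ = lq) − P(D₁ = lq)`,
`π_hc = P(D₀ = hq) − P(D₁ = hq)`, and the total Complier proportion equals
`P(D₁ = e) − P(D₀ = e)`. -/
theorem stmt_9 {Ω : Type*} [MeasureSpace Ω]
    [IsProbabilityMeasure (volume : Measure Ω)]
    (D₀ D₁ : Ω → SchoolType) (hD₀ : Measurable D₀) (hD₁ : Measurable D₁)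
    (hNoDefiers : ∀ᵐ ω, ¬(D₀ ω = .e ∧ D₁ ω ≠ .e))
    (hNoFlipFloppers :
      ∀ᵐ ω, ¬((D₁ ω = .lq ∧ D₀ ω = .hq) ∨ (D₁ ω = .hq ∧ D₀ ω = .lq))) :
    (volume {ω | D₁ ω = .e ∧ D₀ ω = .lq}).toReal =
        (volume {ω | D₀ ω = .lq}).toReal - (volume {ω | D₁ ω = .lq}).toReal ∧
      (volume {ω | D₁ ω = .e ∧ D₀ ω = .hq}).toReal =
        (volume {ω | D₀ ω = .hq}).toReal - (volume {ω | D₁ ω = .hq}).toReal ∧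
      (volume {ω | D₁ ω = .e ∧ D₀ ω = .lq}).toReal +
          (volume {ω | D₁ ω = .e ∧ D₀ ω = .hq}).toReal =
        (volume {ω | D₁ ω = .e}).toReal - (volume {ω | D₀ ω = .e}).toReal := by
  have mS : ∀ s : Set SchoolType, MeasurableSet s := fun s => trivial
  have m1 : ∀ t, MeasurableSet {ω | D₁ ω = t} := fun t => hD₁ (mS {t})
  have m0 : ∀ t, MeasurableSet {ω | D₀ ω = t} := fun t => hD₀ (mS {t})
  have hfin : ∀ s : Set Ω, volume s ≠ ⊤ := fun s => measure_ne_top _ _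
  have hlq : volume {ω | D₀ ω = .lq} =
      volume {ω | D₁ ω = .e ∧ D₀ ω = .lq} + volume {ω | D₁ ω = .lq} := by
    have hae : {ω | D₀ ω = SchoolType.lq} =ᵐ[volume]
        ({ω | D₁ ω = .e ∧ D₀ ω = .lq} ∪ {ω | D₁ ω = .lq} : Set Ω) := by
      rw [Filter.eventuallyEq_set]
      filter_upwards [hNoDefiers, hNoFlipFloppers] with ω h1 h2
      cases h0 : D₀ ω <;> cases hh : D₁ ω <;> simp_all
    rw [measure_congr hae, measure_union _ (m1 .lq)]
    rw [Set.disjoint_left]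
    intro ω hω hω'
    simp only [Set.mem_setOf_eq] at hω hω'
    rw [hω.1] at hω'; exact SchoolType.noConfusion hω'
  have hhq : volume {ω | D₀ ω = .hq} =
      volume {ω | D₁ ω = .e ∧ D₀ ω = .hq} + volume {ω | D₁ ω = .hq} := by
    have hae : {ω | D₀ ω = SchoolType.hq} =ᵐ[volume]
        ({ω | D₁ ω = .e ∧ D₀ ω = .hq} ∪ {ω | D₁ ω = .hq} : Set Ω) := by
      rw [Filter.eventuallyEq_set]
      filter_upwards [hNoDefiers, hNoFlipFloppers] with ω h1 h2
      cases h0 : D₀ ω <;> cases hh : D₁ ω <;> simp_all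
    rw [measure_congr hae, measure_union _ (m1 .hq)]
    rw [Set.disjoint_left]
    intro ω hω hω'
    simp only [Set.mem_setOf_eq] at hω hω'
    rw [hω.1] at hω'; exact SchoolType.noConfusion hω'
  have he : volume {ω | D₁ ω = .e} =
      volume {ω | D₁ ω = .e ∧ D₀ ω = .e} + volume {ω | D₁ ω = .e ∧ D₀ ω = .lq}
        + volume {ω | D₁ ω = .e ∧ D₀ ω = .hq} := by
    have hsplit : {ω | D₁ ω = SchoolType.e} =
        ({ω | D₁ ω = .e ∧ D₀ ω = .e} ∪ {ω | D₁ ω = .e ∧ D₀ ω = .lq})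
          ∪ {ω | D₁ ω = .e ∧ D₀ ω = .hq} := by
      ext ω
      simp only [Set.mem_union, Set.mem_setOf_eq]
      cases h0 : D₀ ω <;> simp_all
    rw [hsplit, measure_union _ (show MeasurableSet {ω | D₁ ω = SchoolType.e ∧ D₀ ω = SchoolType.hq} from (m1 _).inter (m0 _)),
      measure_union _ (show MeasurableSet {ω | D₁ ω = SchoolType.e ∧ D₀ ω = SchoolType.lq} from (m1 _).inter (m0 _))]
    · rw [Set.disjoint_left]
      intro ω hω hω'
      simp only [Set.mem_setOf_eq] at hω hω'
      rw [hω.2] at hω'; exact SchoolType.noConfusion hω'.2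
    · rw [Set.disjoint_left]
      intro ω hω hω'
      simp only [Set.mem_union, Set.mem_setOf_eq] at hω hω'
      rcases hω with h | h <;> rw [h.2] at hω' <;> exact SchoolType.noConfusion hω'.2
  have he0 : volume {ω | D₀ ω = .e} = volume {ω | D₁ ω = .e ∧ D₀ ω = .e} := by
    apply measure_congr
    rw [Filter.eventuallyEq_set]
    filter_upwards [hNoDefiers] with ω h1
    cases h0 : D₀ ω <;> cases hh : D₁ ω <;> simp_all
  have tlq := congrArg ENNReal.toReal hlq
  have thq := congrArg ENNReal.toReal hhq
  have te := congrArg ENNReal.toReal he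
  have te0 := congrArg ENNReal.toReal he0
  rw [ENNReal.toReal_add (hfin _) (hfin _)] at tlq thq
  rw [ENNReal.toReal_add (ENNReal.add_ne_top.mpr ⟨hfin _, hfin _⟩) (hfin _),
    ENNReal.toReal_add (hfin _) (hfin _)] at te
  refine ⟨by linarith, by linarith, by linarith⟩
end
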